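/- Let n ∈ ℕ and let R, H, Ω : ℝ → Matrix (Fin n) (Fin n) ℝ with R and H differentiable and R(t) orthogonal (R(t)·R(t)ᵀ = 1) for every t. Define the spin ω(t) := R'(t)·R(t)ᵀ + R(t)·Ω(t)·R(t)ᵀ and h(t) := R(t)·H(t)·R(t)ᵀ. Then for every t: h'(t) + h(t)·ω(t) − ω(t)·h(t) = R(t)·(H'(t) + H(t)·Ω(t) − Ω(t)·H(t))·R(t)ᵀ (the corotational rates of h and H associated with the spins ω and Ω are objective counterparts of each other). -/

import Mathlib

open Matrix

/-- Entrywise derivative of a matrix-valued function of a real variable. -/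
noncomputable def matDeriv {n : ℕ} (A : ℝ → Matrix (Fin n) (Fin n) ℝ) (t : ℝ) :
    Matrix (Fin n) (Fin n) ℝ :=
  Matrix.of fun i j => deriv (fun s => A s i j) t

lemma matDeriv_mul {n : ℕ} (A B : ℝ → Matrix (Fin n) (Fin n) ℝ) (t : ℝ)
    (hA : ∀ i j, DifferentiableAt ℝ (fun s => A s i j) t)
    (hB : ∀ i j, DifferentiableAt ℝ (fun s => B s i j) t) :
    matDeriv (fun s => A s * B s) t = matDeriv A t * B t + A t * matDeriv B t := by
  ext i j
  simp only [matDeriv, Matrix.of_apply, Matrix.add_apply, Matrix.mul_apply]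
  rw [deriv_fun_sum (fun k _ => ((hA i k).fun_mul (hB k j)))]
  rw [← Finset.sum_add_distrib]
  exact Finset.sum_congr rfl fun k _ => deriv_fun_mul (hA i k) (hB k j)

lemma matDeriv_transpose {n : ℕ} (A : ℝ → Matrix (Fin n) (Fin n) ℝ) (t : ℝ) :
    matDeriv (fun s => (A s)ᵀ) t = (matDeriv A t)ᵀ := by
  ext i j; simp [matDeriv]

theorem corotational_rate_objective_counterpart {n : ℕ}
    (R H Ω : ℝ → Matrix (Fin n) (Fin n) ℝ)
    (hR : ∀ t, ∀ i j, DifferentiableAt ℝ (fun s => R s i j) t)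
    (hH : ∀ t, ∀ i j, DifferentiableAt ℝ (fun s => H s i j) t)
    (horth : ∀ t, R t * (R t)ᵀ = 1) :
    ∀ t : ℝ,
      let ω : Matrix (Fin n) (Fin n) ℝ :=
        matDeriv R t * (R t)ᵀ + R t * Ω t * (R t)ᵀ
      let h : ℝ → Matrix (Fin n) (Fin n) ℝ := fun s => R s * H s * (R s)ᵀ
      matDeriv h t + h t * ω - ω * h t =
        R t * (matDeriv H t + H t * Ω t - Ω t * H t) * (R t)ᵀ := by
  intro t ω h
  have hRt : ∀ i j, DifferentiableAt ℝ (fun s => (R s)ᵀ i j) t := fun i j => hR t j i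
  have hRH : ∀ i j, DifferentiableAt ℝ (fun s => (R s * H s) i j) t := by
    intro i j
    have : (fun s => (R s * H s) i j) = fun s => ∑ k, R s i k * H s k j := by
      funext s; simp [Matrix.mul_apply]
    rw [this]
    exact DifferentiableAt.fun_sum (fun k _ => (hR t i k).mul (hH t k j))
  -- derivative of h
  have hderiv : matDeriv h t =
      (matDeriv R t * H t + R t * matDeriv H t) * (R t)ᵀ
        + R t * H t * (matDeriv R t)ᵀ := by
    have e1 : matDeriv h t = matDeriv (fun s => R s * H s) t * (R t)ᵀ
        + (R t * H t) * matDeriv (fun s => (R s)ᵀ) t :=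
      matDeriv_mul (fun s => R s * H s) (fun s => (R s)ᵀ) t hRH hRt
    rw [e1, matDeriv_mul R H t (hR t) (hH t), matDeriv_transpose]
  -- skew symmetry: R' Rᵀ + R (R')ᵀ = 0
  have hskew : matDeriv R t * (R t)ᵀ + R t * (matDeriv R t)ᵀ = 0 := by
    have : matDeriv (fun s => R s * (R s)ᵀ) t = 0 := by
      have e : (fun s => R s * (R s)ᵀ) = fun _ : ℝ => (1 : Matrix (Fin n) (Fin n) ℝ) := by
        funext s; exact horth s
      rw [e]; ext i j; simp [matDeriv]
    rw [matDeriv_mul R (fun s => (R s)ᵀ) t (hR t) hRt, matDeriv_transpose] at this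
    exact this
  have hRtR : (R t)ᵀ * R t = 1 := mul_eq_one_comm.mp (horth t)
  have hT : (matDeriv R t)ᵀ = -((R t)ᵀ * matDeriv R t * (R t)ᵀ) := by
    have h1 : R t * (matDeriv R t)ᵀ = -(matDeriv R t * (R t)ᵀ) := by
      rw [eq_neg_iff_add_eq_zero, add_comm]; exact hskew
    calc (matDeriv R t)ᵀ = ((R t)ᵀ * R t) * (matDeriv R t)ᵀ := by rw [hRtR, one_mul]
      _ = (R t)ᵀ * (R t * (matDeriv R t)ᵀ) := by rw [Matrix.mul_assoc]
      _ = (R t)ᵀ * -(matDeriv R t * (R t)ᵀ) := by rw [h1]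
      _ = -((R t)ᵀ * matDeriv R t * (R t)ᵀ) := by
          rw [Matrix.mul_neg, Matrix.mul_assoc]
  have c1 : ∀ X : Matrix (Fin n) (Fin n) ℝ, (R t)ᵀ * (R t * X) = X := by
    intro X; rw [← Matrix.mul_assoc, hRtR, one_mul]
  have c2 : ∀ X : Matrix (Fin n) (Fin n) ℝ, R t * ((R t)ᵀ * X) = X := by
    intro X; rw [← Matrix.mul_assoc, horth t, one_mul]
  show matDeriv h t + (R t * H t * (R t)ᵀ) * ω - ω * (R t * H t * (R t)ᵀ) = _
  rw [hderiv, hT]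
  simp only [ω, Matrix.mul_add, Matrix.add_mul, Matrix.sub_mul, Matrix.mul_sub,
    Matrix.mul_neg, Matrix.neg_mul, Matrix.mul_assoc, c1, c2]
  abel
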